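/- arXiv:1704.01700 — 3 statements merged into one kernel-verified Lean document; each statement's English description precedes it below -/
import Mathlib

section
/- Let B be a symmetric positive definite n×n real matrix and s, y vectors with yᵀ s > 0 and s ≠ 0. Then the BFGS update B⁺ = B - (B s sᵀ B)/(sᵀ B s) + (y yᵀ)/(yᵀ s) satisfies det(B⁺) = det(B) · (yᵀ s)/(sᵀ B s). -/
open Matrix

/-- BFGS update formula. -/
noncomputable def bfgsUpdate {n : ℕ} (B : Matrix (Fin n) (Fin n) ℝ)
    (s y : Fin n → ℝ) : Matrix (Fin n) (Fin n) ℝ :=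
  B - (s ⬝ᵥ B.mulVec s)⁻¹ • (B * vecMulVec s s * B) + (y ⬝ᵥ s)⁻¹ • vecMulVec y y

theorem bfgs_det_formula {n : ℕ} (B : Matrix (Fin n) (Fin n) ℝ)
    (hB : B.PosDef) (s y : Fin n → ℝ) (hs : s ≠ 0)
    (hys : 0 < y ⬝ᵥ s) :
    (bfgsUpdate B s y).det = B.det * (y ⬝ᵥ s) / (s ⬝ᵥ B.mulVec s) := by
  set a := s ⬝ᵥ B.mulVec s with ha_def
  set b := y ⬝ᵥ s with hb_def
  have ha : 0 < a := by simpa using hB.dotProduct_mulVec_pos hs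
  have ha0 : a ≠ 0 := ne_of_gt ha
  have hb0 : b ≠ 0 := ne_of_gt hys
  have hdet : IsUnit B.det := isUnit_iff_ne_zero.2 (ne_of_gt hB.det_pos)
  have hBsym : Bᵀ = B := hB.isHermitian
  set C : Matrix (Fin n) (Fin 2) ℝ :=
    Matrix.of (fun i => ![-(a⁻¹) * (B *ᵥ s) i, b⁻¹ * y i]) with hC
  set D : Matrix (Fin n) (Fin 2) ℝ :=
    Matrix.of (fun i => ![(B *ᵥ s) i, y i]) with hD
  have hBs : ∀ j, (B *ᵥ s) j = ∑ k, s k * B k j := by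
    intro j
    have h : (B *ᵥ s) j = (Bᵀ *ᵥ s) j := by rw [hBsym]
    rw [h]
    simp [mulVec, dotProduct, transpose_apply, mul_comm]
  have h1 : ∀ i j, (B * vecMulVec s s * B) i j = (B *ᵥ s) i * (B *ᵥ s) j := by
    intro i j
    calc (B * vecMulVec s s * B) i j
        = ∑ k, (∑ l, B i l * (s l * s k)) * B k j := by
          simp [Matrix.mul_apply, vecMulVec_apply]
      _ = ∑ k, (∑ l, B i l * s l) * (s k * B k j) := by
          apply Finset.sum_congr rfl
          intro k _
          rw [Finset.sum_mul, Finset.sum_mul]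
          apply Finset.sum_congr rfl
          intro l _
          ring
      _ = (∑ l, B i l * s l) * ∑ k, s k * B k j := by rw [← Finset.mul_sum]
      _ = (B *ᵥ s) i * (B *ᵥ s) j := by rw [hBs j]; rfl
  have hupd : bfgsUpdate B s y = B + C * Dᵀ := by
    ext i j
    simp only [bfgsUpdate, Matrix.add_apply, Matrix.sub_apply, Matrix.smul_apply,
      smul_eq_mul, vecMulVec_apply]
    rw [h1 i j]
    simp only [hC, hD, Matrix.mul_apply, Fin.sum_univ_two, transpose_apply,
      Matrix.of_apply, Matrix.cons_val_zero, Matrix.cons_val_one, Matrix.head_cons]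
    ring
  have hinvBs : B⁻¹ *ᵥ (B *ᵥ s) = s := by
    rw [mulVec_mulVec, Matrix.nonsing_inv_mul B hdet, one_mulVec]
  have hinvC : B⁻¹ * C = Matrix.of (fun i => ![-(a⁻¹) * s i, b⁻¹ * (B⁻¹ *ᵥ y) i]) := by
    ext i k
    fin_cases k
    · show ∑ j, B⁻¹ i j * C j 0 = -(a⁻¹) * s i
      rw [← hinvBs]
      simp only [hC, Matrix.of_apply, Matrix.cons_val_zero, mulVec, dotProduct,
        Finset.mul_sum]
      apply Finset.sum_congr rfl
      intro j _
      apply Finset.sum_congr rfl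
      intro x _
      ring
    · show ∑ j, B⁻¹ i j * C j 1 = b⁻¹ * (B⁻¹ *ᵥ y) i
      simp only [hC, Matrix.of_apply, Matrix.cons_val_one, Matrix.head_cons, Matrix.cons_val_zero, mulVec,
        dotProduct, Finset.mul_sum]
      apply Finset.sum_congr rfl
      intro j _
      ring
  have hBsy : (B *ᵥ s) ⬝ᵥ (B⁻¹ *ᵥ y) = b := by
    have h : (B *ᵥ s) ⬝ᵥ (B⁻¹ *ᵥ y) = s ⬝ᵥ (Bᵀ *ᵥ (B⁻¹ *ᵥ y)) := by
      rw [dotProduct_comm, dotProduct_mulVec, ← mulVec_transpose, dotProduct_comm]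
    rw [h, hBsym, mulVec_mulVec, Matrix.mul_nonsing_inv B hdet, one_mulVec,
      dotProduct_comm]
  have hBss : (B *ᵥ s) ⬝ᵥ s = a := dotProduct_comm _ _
  have hM : Dᵀ * (B⁻¹ * C) =
      !![-1, 1; -(a⁻¹ * b), b⁻¹ * (y ⬝ᵥ B⁻¹ *ᵥ y)] := by
    rw [hinvC]
    ext k l
    fin_cases k <;> fin_cases l
    · show ∑ i, D i 0 * (-(a⁻¹) * s i) = -1
      have h : ∑ i, D i 0 * (-(a⁻¹) * s i) = -(a⁻¹) * ((B *ᵥ s) ⬝ᵥ s) := by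
        simp only [hD, Matrix.of_apply, Matrix.cons_val_zero, dotProduct,
          Finset.mul_sum]
        apply Finset.sum_congr rfl
        intro i _
        ring
      rw [h, hBss]
      field_simp
    · show ∑ i, D i 0 * (b⁻¹ * (B⁻¹ *ᵥ y) i) = 1
      have h : ∑ i, D i 0 * (b⁻¹ * (B⁻¹ *ᵥ y) i) = b⁻¹ * ((B *ᵥ s) ⬝ᵥ (B⁻¹ *ᵥ y)) := by
        simp only [hD, Matrix.of_apply, Matrix.cons_val_zero, dotProduct,
          Finset.mul_sum]
        apply Finset.sum_congr rfl
        intro i _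
        ring
      rw [h, hBsy]
      field_simp
    · show ∑ i, D i 1 * (-(a⁻¹) * s i) = -(a⁻¹ * b)
      have h : ∑ i, D i 1 * (-(a⁻¹) * s i) = -(a⁻¹) * (y ⬝ᵥ s) := by
        simp only [hD, Matrix.of_apply, Matrix.cons_val_one, Matrix.head_cons, Matrix.cons_val_zero,
          dotProduct, Finset.mul_sum]
        apply Finset.sum_congr rfl
        intro i _
        ring
      rw [h, ← hb_def]
      ring
    · show ∑ i, D i 1 * (b⁻¹ * (B⁻¹ *ᵥ y) i) = b⁻¹ * (y ⬝ᵥ B⁻¹ *ᵥ y)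
      simp only [hD, Matrix.of_apply, Matrix.cons_val_one, Matrix.head_cons, Matrix.cons_val_zero,
        dotProduct, Finset.mul_sum]
      apply Finset.sum_congr rfl
      intro i _
      ring
  have key : bfgsUpdate B s y = B * (1 + B⁻¹ * C * Dᵀ) := by
    rw [hupd, Matrix.mul_add, Matrix.mul_one, ← Matrix.mul_assoc, ← Matrix.mul_assoc,
      Matrix.mul_nonsing_inv B hdet, Matrix.one_mul]
  rw [key, det_mul, det_one_add_mul_comm, hM]
  have hdet2 : (1 + !![-1, 1; -(a⁻¹ * b), b⁻¹ * (y ⬝ᵥ B⁻¹ *ᵥ y)]).det = a⁻¹ * b := by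
    rw [Matrix.det_fin_two]
    simp [Matrix.one_apply]
  rw [hdet2]
  field_simp
end

section
/- Let B be an n×n symmetric positive definite matrix with maximum eigenvalue λ_max, and let s ≠ 0, y satisfy yᵀ s ≥ λ ‖s‖² for some λ > 0. Then the BFGS update B⁺ = B - (B s sᵀ B)/(sᵀ B s) + (y yᵀ)/(yᵀ s) satisfies det(B⁺) ≥ det(B) · λ / λ_max. -/
open Matrix

theorem bfgs_det_lower_bound {n : ℕ} (B : Matrix (Fin n) (Fin n) ℝ)
    (hB : B.PosDef) (lmax : ℝ)
    (hmax : ∀ v : Fin n → ℝ, v ⬝ᵥ B.mulVec v ≤ lmax * (v ⬝ᵥ v))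
    (s y : Fin n → ℝ) (hs : s ≠ 0) (lam : ℝ) (hlam : 0 < lam)
    (hys : lam * (s ⬝ᵥ s) ≤ y ⬝ᵥ s) :
    B.det * lam / lmax ≤ (bfgsUpdate B s y).det := by
  have hsym : Bᵀ = B := by simpa using hB.1.eq
  have hα : 0 < s ⬝ᵥ B.mulVec s := by simpa using hB.dotProduct_mulVec_pos hs
  have hdet : 0 < B.det := hB.det_pos
  have hs2 : 0 < s ⬝ᵥ s :=
    lt_of_le_of_ne (Finset.sum_nonneg fun i _ => mul_self_nonneg _)
      (fun h => hs (dotProduct_self_eq_zero.mp h.symm))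
  have hβ : 0 < y ⬝ᵥ s := lt_of_lt_of_le (by positivity) hys
  have hlmax : 0 < lmax := by nlinarith [hmax s]
  have hBinv : B⁻¹ * B = 1 := nonsing_inv_mul B hdet.ne'.isUnit
  have hBinv' : B * B⁻¹ = 1 := mul_nonsing_inv B hdet.ne'.isUnit
  set α := s ⬝ᵥ B.mulVec s with hαdef
  set β := y ⬝ᵥ s with hβdef
  set u := B *ᵥ s with hudef
  set w := B⁻¹ *ᵥ y with hwdef
  have hsum : ∀ (c : ℝ) (p q : Fin n → ℝ), (∑ k, p k * (c * q k)) = c * (p ⬝ᵥ q) := by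
    intro c p q
    calc (∑ k, p k * (c * q k)) = ∑ k, c * (p k * q k) :=
          Finset.sum_congr rfl fun k _ => by ring
      _ = c * ∑ k, p k * q k := (Finset.mul_sum _ _ _).symm
      _ = c * (p ⬝ᵥ q) := rfl
  have hvmB : s ᵥ* B = u := by rw [← Matrix.mulVec_transpose, hsym]
  have hBiw : B⁻¹ *ᵥ u = s := by
    rw [hudef, Matrix.mulVec_mulVec, hBinv, Matrix.one_mulVec]
  have huw : u ⬝ᵥ w = β := by
    rw [dotProduct_comm, hwdef, hudef, Matrix.dotProduct_mulVec,
      ← Matrix.mulVec_transpose, hsym, Matrix.mulVec_mulVec, hBinv', Matrix.one_mulVec]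
  have hus : u ⬝ᵥ s = α := by rw [dotProduct_comm, hudef]
  set U : Matrix (Fin n) (Fin 2) ℝ :=
    Matrix.of (fun i j => if j = 0 then (-α⁻¹) * u i else β⁻¹ * y i) with hU
  set V : Matrix (Fin 2) (Fin n) ℝ :=
    Matrix.of (fun j i => if j = 0 then u i else y i) with hV
  have hkey : B * vecMulVec s s * B = vecMulVec u u := by
    rw [vecMulVec_eq Unit, show B * (replicateCol Unit s * replicateRow Unit s) * B
        = (B * replicateCol Unit s) * (replicateRow Unit s * B) by
      rw [Matrix.mul_assoc, Matrix.mul_assoc, Matrix.mul_assoc],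
      ← Matrix.replicateCol_mulVec, ← Matrix.replicateRow_vecMul, hvmB, ← hudef, ← vecMulVec_eq Unit]
  have hupd : bfgsUpdate B s y = B + U * V := by
    unfold bfgsUpdate
    rw [← hαdef, ← hβdef, hkey]
    ext i j
    simp only [Matrix.add_apply, Matrix.sub_apply, Matrix.smul_apply, smul_eq_mul,
      Matrix.mul_apply, Fin.sum_univ_two, hU, hV, Matrix.of_apply, vecMulVec_apply]
    norm_num
    ring
  have hBU : B⁻¹ * U =
      Matrix.of (fun i j => if j = 0 then (-α⁻¹) * s i else β⁻¹ * w i) := by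
    ext i j
    fin_cases j
    · simp only [Matrix.mul_apply, hU, Matrix.of_apply]
      norm_num
      rw [hsum, show B⁻¹ i ⬝ᵥ u = s i from congrFun hBiw i]
    · simp only [Matrix.mul_apply, hU, Matrix.of_apply]
      norm_num
      rw [hsum]
      rfl
  have hM : (1 : Matrix (Fin 2) (Fin 2) ℝ) + V * B⁻¹ * U =
      !![0, 1; (-α⁻¹) * β, 1 + β⁻¹ * (y ⬝ᵥ w)] := by
    rw [Matrix.mul_assoc, hBU]
    ext a b
    fin_cases a <;> fin_cases b <;>
        simp only [Matrix.add_apply, Matrix.one_apply, Matrix.mul_apply, hV,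
          Matrix.of_apply] <;> norm_num
    · rw [hsum, hus]; field_simp; norm_num
    · rw [hsum, huw]; field_simp
    · rw [hsum]
    · rw [hsum]
  have hdetU : (bfgsUpdate B s y).det = B.det * (α⁻¹ * β) := by
    rw [hupd, Matrix.det_add_mul U V hdet.ne'.isUnit, hM, Matrix.det_fin_two_of]
    ring
  rw [hdetU]
  have key : lam / lmax ≤ α⁻¹ * β := by
    rw [← div_eq_inv_mul, div_le_div_iff₀ hlmax hα]
    nlinarith [hmax s]
  calc B.det * lam / lmax = B.det * (lam / lmax) := by ring
    _ ≤ B.det * (α⁻¹ * β) := mul_le_mul_of_nonneg_left key hdet.le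
end

section
/- Under the recursion of the previous statement, if additionally y_rᵀ s_r ≥ λ ‖s_r‖² for all r with λ > 0, then det(B_M) ≥ det(B_0) · λ^M / (trace(B_0) + Λ M)^M. -/
open Matrix Finset

lemma det_add_mul' {n : ℕ} {A : Matrix (Fin n) (Fin n) ℝ} (hA : IsUnit A.det)
    (U V : Matrix (Fin n) (Fin 2) ℝ) :
    (A + U * Vᵀ).det = A.det * (1 + Vᵀ * A⁻¹ * U).det := by
  have h : A + U * Vᵀ = A * (1 + A⁻¹ * U * Vᵀ) := by
    rw [Matrix.mul_add, Matrix.mul_one, ← Matrix.mul_assoc, ← Matrix.mul_assoc,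
      Matrix.mul_nonsing_inv _ hA, Matrix.one_mul]
  rw [h, det_mul, Matrix.det_one_add_mul_comm, Matrix.mul_assoc]

lemma det_bfgsUpdate {n : ℕ} {B : Matrix (Fin n) (Fin n) ℝ} (hB : B.PosDef)
    (s y : Fin n → ℝ) (hc : s ⬝ᵥ B.mulVec s ≠ 0) (hd : y ⬝ᵥ s ≠ 0) :
    (bfgsUpdate B s y).det = B.det * (y ⬝ᵥ s) / (s ⬝ᵥ B.mulVec s) := by
  have hsym : Bᵀ = B := by
    have := hB.isHermitian.eq
    simpa using this
  set c := s ⬝ᵥ B.mulVec s with hcdef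
  set d := y ⬝ᵥ s with hddef
  set U : Matrix (Fin n) (Fin 2) ℝ :=
    Matrix.of fun i j => if j = 0 then -c⁻¹ * B.mulVec s i else d⁻¹ * y i with hU
  set V : Matrix (Fin n) (Fin 2) ℝ :=
    Matrix.of fun i j => if j = 0 then B.mulVec s i else y i with hV
  have hl : ∀ (u v : Fin n → ℝ), B * vecMulVec u v = vecMulVec (B *ᵥ u) v := by
    intro u v; ext i k
    simp only [Matrix.mul_apply, vecMulVec_apply, Matrix.mulVec, dotProduct,
      Finset.sum_mul]
    exact Finset.sum_congr rfl fun j _ => by ring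
  have hr : ∀ (u v : Fin n → ℝ), vecMulVec u v * B = vecMulVec u (Bᵀ *ᵥ v) := by
    intro u v; ext i k
    simp only [Matrix.mul_apply, vecMulVec_apply, Matrix.mulVec, dotProduct,
      Finset.mul_sum]
    exact Finset.sum_congr rfl fun j _ => by rw [Matrix.transpose_apply]; ring
  have h1 : B * vecMulVec s s * B = vecMulVec (B *ᵥ s) (B *ᵥ s) := by
    rw [hl, hr, hsym]
  have hupd : bfgsUpdate B s y = B + U * Vᵀ := by
    have hUV : U * Vᵀ = (-c⁻¹) • vecMulVec (B *ᵥ s) (B *ᵥ s) + d⁻¹ • vecMulVec y y := by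
      ext i k
      simp [Matrix.mul_apply, Fin.sum_univ_two, vecMulVec_apply, hU, hV]
      ring
    rw [bfgsUpdate, hUV, h1, neg_smul]
    abel
  have hAunit : IsUnit B.det := hB.det_pos.ne'.isUnit
  rw [hupd, det_add_mul' hAunit U V]
  have hBinvBs : B⁻¹.mulVec (B.mulVec s) = s := by
    rw [Matrix.mulVec_mulVec, Matrix.nonsing_inv_mul _ hAunit, Matrix.one_mulVec]
  have hBBinvy : B.mulVec (B⁻¹.mulVec y) = y := by
    rw [Matrix.mulVec_mulVec, Matrix.mul_nonsing_inv _ hAunit, Matrix.one_mulVec]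
  have hentry : ∀ a b, (Vᵀ * B⁻¹ * U) a b =
      (fun i => V i a) ⬝ᵥ B⁻¹.mulVec (fun i => U i b) := by
    intro a b
    rw [Matrix.mul_assoc]
    simp [Matrix.mul_apply, Matrix.mulVec, dotProduct, Finset.mul_sum]
  have hdot : ∀ w : Fin n → ℝ, B.mulVec s ⬝ᵥ w = s ⬝ᵥ B.mulVec w := by
    intro w
    conv_rhs => rw [Matrix.dotProduct_mulVec, ← hsym, Matrix.vecMul_transpose]
  have hu0 : (fun i => U i 0) = (-c⁻¹) • (B *ᵥ s) := by
    funext i; simp [hU]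
  have hu1 : (fun i => U i 1) = d⁻¹ • y := by
    funext i; simp [hU]
  have hv0 : (fun i => V i 0) = B *ᵥ s := by
    funext i; simp [hV]
  have hv1 : (fun i => V i 1) = y := by
    funext i; simp [hV]
  have e00 : (Vᵀ * B⁻¹ * U) 0 0 = -1 := by
    rw [hentry, hu0, hv0, Matrix.mulVec_smul, hBinvBs, dotProduct_smul, smul_eq_mul,
      dotProduct_comm, ← hcdef]
    field_simp
  have e10 : (Vᵀ * B⁻¹ * U) 1 0 = -c⁻¹ * d := by
    rw [hentry, hu0, hv1, Matrix.mulVec_smul, hBinvBs, dotProduct_smul, smul_eq_mul, ← hddef]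
  have e01 : (Vᵀ * B⁻¹ * U) 0 1 = d⁻¹ * (s ⬝ᵥ y) := by
    rw [hentry, hu1, hv0, Matrix.mulVec_smul, dotProduct_smul, smul_eq_mul, hdot, hBBinvy]
  have e11 : (Vᵀ * B⁻¹ * U) 1 1 = d⁻¹ * (y ⬝ᵥ B⁻¹.mulVec y) := by
    rw [hentry, hu1, hv1, Matrix.mulVec_smul, dotProduct_smul, smul_eq_mul]
  rw [Matrix.det_fin_two]
  simp only [Matrix.add_apply, Matrix.one_apply_eq, Matrix.one_apply_ne (by decide : (0 : Fin 2) ≠ 1),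
    Matrix.one_apply_ne (by decide : (1 : Fin 2) ≠ 0), e00, e01, e10, e11]
  have hsy : s ⬝ᵥ y = d := by rw [hddef, dotProduct_comm]
  rw [hsy]
  field_simp
  ring

lemma mul_vecMulVec' {n : ℕ} (B : Matrix (Fin n) (Fin n) ℝ) (u v : Fin n → ℝ) :
    B * vecMulVec u v = vecMulVec (B *ᵥ u) v := by
  ext i k
  simp only [Matrix.mul_apply, vecMulVec_apply, Matrix.mulVec, dotProduct,
    Finset.sum_mul]
  exact Finset.sum_congr rfl fun j _ => by ring

lemma vecMulVec_mul' {n : ℕ} (u v : Fin n → ℝ) (B : Matrix (Fin n) (Fin n) ℝ) :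
    vecMulVec u v * B = vecMulVec u (Bᵀ *ᵥ v) := by
  ext i k
  simp only [Matrix.mul_apply, vecMulVec_apply, Matrix.mulVec, dotProduct,
    Finset.mul_sum]
  exact Finset.sum_congr rfl fun j _ => by rw [Matrix.transpose_apply]; ring

lemma trace_vecMulVec' {n : ℕ} (u v : Fin n → ℝ) :
    (vecMulVec u v).trace = u ⬝ᵥ v := by
  simp [Matrix.trace, Matrix.diag, vecMulVec_apply, dotProduct]

open scoped MatrixOrder in
lemma dotProduct_mulVec_le_trace {n : ℕ} {B : Matrix (Fin n) (Fin n) ℝ} (hB : B.PosDef)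
    (s : Fin n → ℝ) : s ⬝ᵥ B *ᵥ s ≤ B.trace * (s ⬝ᵥ s) := by
  set C := CFC.sqrt B with hCdef
  have hC : C.PosSemidef := Matrix.nonneg_iff_posSemidef.mp (CFC.sqrt_nonneg B)
  have hCsym : Cᵀ = C := by simpa using hC.isHermitian.eq
  have hCC : C * C = B :=
    CFC.sqrt_mul_sqrt_self B (Matrix.nonneg_iff_posSemidef.mpr hB.posSemidef)
  have h1 : s ⬝ᵥ B *ᵥ s = (C *ᵥ s) ⬝ᵥ (C *ᵥ s) := by
    rw [← hCC, ← Matrix.mulVec_mulVec, Matrix.dotProduct_mulVec, ← Matrix.mulVec_transpose,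
      hCsym]
  have h2 : B.trace = ∑ i, ∑ j, (C i j) ^ 2 := by
    rw [← hCC, Matrix.trace]
    refine Finset.sum_congr rfl fun i _ => ?_
    rw [Matrix.diag_apply, Matrix.mul_apply]
    refine Finset.sum_congr rfl fun j _ => ?_
    have h := congrFun (congrFun hCsym j) i
    rw [Matrix.transpose_apply] at h
    rw [← h, sq]
  rw [h1, h2, Finset.sum_mul]
  have hss : s ⬝ᵥ s = ∑ j, s j ^ 2 := by
    simp [dotProduct, sq]
  refine Finset.sum_le_sum fun i _ => ?_
  have := Finset.sum_mul_sq_le_sq_mul_sq Finset.univ (fun j => C i j) s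
  calc (C *ᵥ s) i * (C *ᵥ s) i = (∑ j, C i j * s j) ^ 2 := by
        rw [sq]; rfl
    _ ≤ (∑ j, C i j ^ 2) * ∑ j, s j ^ 2 := this
    _ = (∑ j, C i j ^ 2) * (s ⬝ᵥ s) := by rw [hss]

lemma posDef_trace_pos {n : ℕ} (hn : 0 < n) {B : Matrix (Fin n) (Fin n) ℝ}
    (hB : B.PosDef) : 0 < B.trace := by
  have hdiag : ∀ i, 0 < B i i := by
    intro i
    exact hB.diag_pos
  have : Nonempty (Fin n) := Fin.pos_iff_nonempty.mp hn
  exact Finset.sum_pos (fun i _ => hdiag i) Finset.univ_nonempty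

lemma trace_bfgsUpdate_le {n : ℕ} {B : Matrix (Fin n) (Fin n) ℝ} (hB : B.PosDef)
    {s y : Fin n → ℝ} {Lam : ℝ}
    (hcpos : 0 < s ⬝ᵥ B.mulVec s) (hdpos : 0 < y ⬝ᵥ s)
    (hcurv : y ⬝ᵥ y ≤ Lam * (y ⬝ᵥ s)) :
    (bfgsUpdate B s y).trace ≤ B.trace + Lam := by
  have hsym : Bᵀ = B := by simpa using hB.isHermitian.eq
  have h1 : (B * vecMulVec s s * B).trace = (B *ᵥ s) ⬝ᵥ (B *ᵥ s) := by
    rw [mul_vecMulVec', vecMulVec_mul', hsym, trace_vecMulVec']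
  rw [bfgsUpdate, Matrix.trace_add, Matrix.trace_sub, Matrix.trace_smul, Matrix.trace_smul,
    h1, trace_vecMulVec', smul_eq_mul, smul_eq_mul]
  have h2 : 0 ≤ (s ⬝ᵥ B.mulVec s)⁻¹ * ((B *ᵥ s) ⬝ᵥ (B *ᵥ s)) :=
    mul_nonneg (inv_nonneg.2 hcpos.le) (Finset.sum_nonneg fun i _ => mul_self_nonneg _)
  have h3 : (y ⬝ᵥ s)⁻¹ * (y ⬝ᵥ y) ≤ Lam := by
    have h4 := mul_le_mul_of_nonneg_left hcurv (inv_nonneg.2 hdpos.le)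
    have h5 : (y ⬝ᵥ s)⁻¹ * (Lam * (y ⬝ᵥ s)) = Lam := by
      field_simp
    linarith
  linarith


theorem bfgs_recursion_det_bound {n M : ℕ}
    (B : ℕ → Matrix (Fin n) (Fin n) ℝ) (s y : ℕ → Fin n → ℝ)
    (hB0 : (B 0).PosDef)
    (hpos : ∀ r < M, (B r).PosDef)
    (hs : ∀ r < M, s r ≠ 0)
    (lam Lam : ℝ) (hlam : 0 < lam) (hle : lam ≤ Lam)
    (hys : ∀ r < M, lam * (s r ⬝ᵥ s r) ≤ y r ⬝ᵥ s r)
    (hyspos : ∀ r < M, 0 < y r ⬝ᵥ s r)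
    (hcurv : ∀ r < M, (y r ⬝ᵥ y r) ≤ Lam * (y r ⬝ᵥ s r))
    (hrec : ∀ r < M, B (r + 1) = bfgsUpdate (B r) (s r) (y r)) :
    (B 0).det * lam ^ M / ((B 0).trace + Lam * M) ^ M ≤ (B M).det := by
  rcases Nat.eq_zero_or_pos M with rfl | hM
  · simp
  have hn : 0 < n := by
    rcases Nat.eq_zero_or_pos n with hn0 | h
    · exact absurd (funext fun i : Fin n => absurd i.2 (by omega) : s 0 = 0) (hs 0 hM)
    · exact h
  set T0 := (B 0).trace with hT0def
  set D := T0 + Lam * M with hDdef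
  have hT0 : 0 < T0 := posDef_trace_pos hn hB0
  have hLam : 0 < Lam := lt_of_lt_of_le hlam hle
  have hMpos : (0:ℝ) < (M:ℝ) := by exact_mod_cast hM
  have hDpos : 0 < D := by
    have : 0 < Lam * M := mul_pos hLam hMpos
    linarith
  have key : ∀ r, r ≤ M → ((B r).trace ≤ T0 + Lam * r ∧ 0 < (B r).det ∧
      (B 0).det * (lam / D) ^ r ≤ (B r).det) := by
    intro r
    induction r with
    | zero => exact fun _ => ⟨by simp [hT0def], hB0.det_pos, by simp⟩
    | succ r ih =>
      intro hr1
      have hrM : r < M := Nat.lt_of_succ_le hr1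
      obtain ⟨htr, hdet, hge⟩ := ih hrM.le
      have hBr := hpos r hrM
      have hsr := hs r hrM
      have hss : 0 < s r ⬝ᵥ s r := by
        rcases (Finset.sum_nonneg fun i _ => mul_self_nonneg (s r i) :
            0 ≤ s r ⬝ᵥ s r).lt_or_eq with h | h
        · exact h
        · exact absurd (dotProduct_self_eq_zero.mp h.symm) hsr
      have hc : 0 < s r ⬝ᵥ (B r).mulVec (s r) := by
        have := hBr.dotProduct_mulVec_pos hsr
        simpa using this
      have hd := hyspos r hrM
      have htr' : (B (r+1)).trace ≤ T0 + Lam * (r+1) := by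
        rw [hrec r hrM]
        have := trace_bfgsUpdate_le hBr hc hd (hcurv r hrM)
        linarith
      have hdetEq : (B (r+1)).det =
          (B r).det * (y r ⬝ᵥ s r) / (s r ⬝ᵥ (B r).mulVec (s r)) := by
        rw [hrec r hrM]
        exact det_bfgsUpdate hBr _ _ hc.ne' hd.ne'
      have hcle : s r ⬝ᵥ (B r).mulVec (s r) ≤ D * (s r ⬝ᵥ s r) := by
        have h1 := dotProduct_mulVec_le_trace hBr (s r)
        have h2 : (B r).trace ≤ D := by
          have h3 : (r:ℝ) ≤ (M:ℝ) := by exact_mod_cast hrM.le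
          nlinarith
        nlinarith [hss.le]
      have hratio : lam / D ≤ (y r ⬝ᵥ s r) / (s r ⬝ᵥ (B r).mulVec (s r)) :=
        calc lam / D = lam * (s r ⬝ᵥ s r) / (D * (s r ⬝ᵥ s r)) := by
              rw [mul_div_mul_right _ _ hss.ne']
          _ ≤ (y r ⬝ᵥ s r) / (s r ⬝ᵥ (B r).mulVec (s r)) :=
              div_le_div₀ hd.le (hys r hrM) hc hcle
      have hdetpos : 0 < (B (r+1)).det := by
        rw [hdetEq]
        exact div_pos (mul_pos hdet hd) hc
      refine ⟨by push_cast; exact htr', hdetpos, ?_⟩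
      rw [pow_succ, hdetEq]
      calc (B 0).det * ((lam/D)^r * (lam/D)) = ((B 0).det * (lam/D)^r) * (lam/D) := by ring
        _ ≤ (B r).det * ((y r ⬝ᵥ s r) / (s r ⬝ᵥ (B r).mulVec (s r))) :=
            mul_le_mul hge hratio (by positivity) hdet.le
        _ = (B r).det * (y r ⬝ᵥ s r) / (s r ⬝ᵥ (B r).mulVec (s r)) := by ring
  obtain ⟨-, -, hfin⟩ := key M le_rfl
  calc (B 0).det * lam ^ M / D ^ M = (B 0).det * (lam/D)^M := by
        rw [div_pow, mul_div_assoc]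
    _ ≤ (B M).det := hfin
end
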